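/- Define μ_n(α,β) = ∑_{k=0}^n C(n+k,2k)·Cat(k)·α^{n-k} β^k where Cat(k) is the k-th Catalan number. Then μ_n(α,β) = (1/(n+1)) ∑_{j=0}^{n+1} C(n+1,j) C(2n-j, n-j) α^j β^{n-j}. -/

import Mathlib

/-- Binomial coefficient on integer arguments, vanishing when `b < 0` or `b > a`. -/
def intChoose (a b : ℤ) : ℤ :=
  if 0 ≤ b ∧ b ≤ a then ((a.toNat).choose b.toNat : ℤ) else 0

lemma key_nat (n k : ℕ) (h : k ≤ n) :
    (n + 1) * ((n + k).choose (2 * k) * catalan k) =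
      (n + 1).choose (n - k) * (n + k).choose k := by
  have hsym : (n + 1).choose (n - k) = (n + 1).choose (k + 1) := by
    rw [← Nat.choose_symm (by omega : k + 1 ≤ n + 1)]
    congr 1; omega
  apply Nat.eq_of_mul_eq_mul_left (show 0 < k + 1 by omega)
  have hcat : (k + 1) * catalan k = k.centralBinom := succ_mul_catalan_eq_centralBinom k
  have htri : (n + k).choose (2 * k) * (2 * k).choose k =
      (n + k).choose k * (n + k - k).choose (2 * k - k) :=
    Nat.choose_mul (by omega)
  have h2 : (n + k - k) = n := by omega
  have h3 : (2 * k - k) = k := by omega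
  have hsucc : (n + 1) * n.choose k = (n + 1).choose (k + 1) * (k + 1) :=
    Nat.add_one_mul_choose_eq n k
  calc (k + 1) * ((n + 1) * ((n + k).choose (2 * k) * catalan k))
      = (n + 1) * ((n + k).choose (2 * k) * ((k + 1) * catalan k)) := by ring
    _ = (n + 1) * ((n + k).choose (2 * k) * (2 * k).choose k) := by
        rw [hcat, Nat.centralBinom]
    _ = (n + 1) * ((n + k).choose k * n.choose k) := by rw [htri, h2, h3]
    _ = ((n + 1) * n.choose k) * (n + k).choose k := by ring
    _ = (k + 1) * ((n + 1).choose (n - k) * (n + k).choose k) := by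
        rw [hsucc, hsym]; ring

/-- The two formulas for the moments agree (stated after clearing the denominator `n+1`):
`(n+1)·∑_{k=0}^n C(n+k,2k)·Cat(k)·α^{n-k}β^k = ∑_{j=0}^{n+1} C(n+1,j)C(2n-j,n-j)α^j β^{n-j}`. -/
theorem moments_two_formulas {R : Type*} [CommRing R] (α β : R) (n : ℕ) :
    ((n : R) + 1) *
        ∑ k ∈ Finset.range (n + 1),
          (((n + k).choose (2 * k) * catalan k : ℕ) : R) * α ^ (n - k) * β ^ k =
      ∑ j ∈ Finset.range (n + 2),
        ((n + 1).choose j : R) *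
          ((intChoose (2 * (n : ℤ) - j) ((n : ℤ) - j) : ℤ) : R) *
          α ^ j * β ^ (((n : ℤ) - j).toNat) := by
  conv_rhs => rw [Finset.sum_range_succ]
  have hlast : (intChoose (2 * (n : ℤ) - (n + 1 : ℕ)) ((n : ℤ) - (n + 1 : ℕ)) : ℤ) = 0 := by
    unfold intChoose
    rw [if_neg]
    push_cast
    omega
  rw [hlast]
  push_cast
  rw [Finset.mul_sum, mul_zero, zero_mul, zero_mul, add_zero,
    ← Finset.sum_range_reflect]
  apply Finset.sum_congr rfl
  intro k hk
  rw [Finset.mem_range] at hk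
  have hk' : k ≤ n := by omega
  have h1 : n + 1 - 1 - k = n - k := by omega
  rw [h1]
  set m := n - k with hm
  have hnm : n - m = k := by omega
  have hmn : m ≤ n := by omega
  have h2 : ((n : ℤ) - (k : ℕ)) = (m : ℤ) := by omega
  have h3 : (2 * (n : ℤ) - (k : ℕ)) = ((n + m : ℕ) : ℤ) := by push_cast; omega
  have h4 : intChoose (2 * (n : ℤ) - (k : ℕ)) ((n : ℤ) - (k : ℕ)) =
      ((n + m).choose m : ℤ) := by
    rw [h2, h3]
    unfold intChoose
    rw [if_pos ⟨Int.natCast_nonneg m, by exact_mod_cast Nat.le_add_left m n⟩]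
    rw [Int.toNat_natCast, Int.toNat_natCast]
  rw [h4, h2, Int.toNat_natCast]
  have := key_nat n m hmn
  have hcast : ((n : R) + 1) * (((n + m).choose (2 * m) : R) * (catalan m : R)) =
      ((n + 1).choose (n - m) : R) * ((n + m).choose m : R) := by
    exact_mod_cast congrArg (fun x : ℕ => (x : R)) this
  rw [hnm] at hcast
  push_cast
  calc ((n : R) + 1) * (((n + m).choose (2 * m) : R) * (catalan m : R) * α ^ (n - m) * β ^ m)
      = (((n : R) + 1) * (((n + m).choose (2 * m) : R) * (catalan m : R))) *
          α ^ (n - m) * β ^ m := by ring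
    _ = ((n + 1).choose k : R) * ((n + m).choose m : R) * α ^ (n - m) * β ^ m := by
        rw [hcast]
    _ = _ := by rw [hnm]
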